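/- Let G be a finite graph with linearly ordered edges and edge weights γ_e in a commutative ring, and let θ be another variable. Then the multivariate Tutte polynomial admits Traldi's spanning tree expansion: Z_T(G; θ, γ) = θ^{k(G)} · Σ_{T ∈ T(G)} (∏_{e internally inactive w.r.t. T} γ_e) · (∏_{e internally active w.r.t. T} (γ_e + θ)) · (∏_{e externally active w.r.t. T} (γ_e + 1)), where T(G) is the set of maximal spanning forests of G (spanning trees on each component). -/

import Mathlib

open scoped Classical
open Finset

structure MGraph (V E : Type) where
  ends : E → Sym2 V

namespace MGraph

variable {V E S R : Type} [Fintype V] [Fintype E]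

/-- Two vertices are joined by an edge of `A`. -/
def adjRel (G : MGraph V E) (A : Finset E) (u v : V) : Prop :=
  ∃ e ∈ A, G.ends e = s(u, v)

/-- The setoid on vertices whose classes are the connected components of the
spanning subgraph `(V, A)`. -/
def compSetoid (G : MGraph V E) (A : Finset E) : Setoid V :=
  ⟨Relation.EqvGen (G.adjRel A), Relation.EqvGen.is_equivalence _⟩

/-- The connected components of the spanning subgraph `(V, A)`. -/
def Comp (G : MGraph V E) (A : Finset E) : Type := Quotient (G.compSetoid A)

noncomputable instance (G : MGraph V E) (A : Finset E) : Fintype (G.Comp A) :=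
  @Quotient.fintype V _ (G.compSetoid A) (Classical.decRel _)

/-- `k(A)`: the number of connected components of the spanning subgraph `(V, A)`. -/
noncomputable def kA (G : MGraph V E) (A : Finset E) : ℕ := Nat.card (G.Comp A)

/-- `u` and `v` are connected in the spanning subgraph `(V, A)`. -/
def Connects (G : MGraph V E) (A : Finset E) (u v : V) : Prop :=
  Relation.EqvGen (G.adjRel A) u v

/-- The endpoints of `e` are connected in the spanning subgraph `(V, A)`. -/
def EndsConnected (G : MGraph V E) (A : Finset E) (e : E) : Prop :=
  ∃ u v, G.ends e = s(u, v) ∧ G.Connects A u v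

def IsLoop (G : MGraph V E) (e : E) : Prop := (G.ends e).IsDiag

/-- `(V, A)` is a forest (acyclic spanning subgraph): every edge of `A` is a bridge of it. -/
def IsForest (G : MGraph V E) (A : Finset E) : Prop :=
  ∀ e ∈ A, ¬ G.EndsConnected (A.erase e) e

/-- All vertices are pairwise connected using edges of `A`. -/
def ConnectsAll (G : MGraph V E) (A : Finset E) : Prop := ∀ u v, G.Connects A u v

/-- A maximal spanning forest: a forest restricting to a spanning tree of each
connected component of `G`. -/
def IsSpanningTree (G : MGraph V E) (T : Finset E) : Prop :=
  G.IsForest T ∧ ∀ u v, G.Connects T u v ↔ G.Connects Finset.univ u v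

/-- `e ∈ T` is internally active: `e` is minimal in the cut
`{f : (T - e) ∪ {f} ∈ 𝒯(G)}`. -/
def IntActive [LinearOrder E] (G : MGraph V E) (T : Finset E) (e : E) : Prop :=
  e ∈ T ∧ ∀ f, G.IsSpanningTree (insert f (T.erase e)) → e ≤ f

/-- The edge set of the unique cycle of `T ∪ {e}` (when it exists):
`e` together with those `f ∈ T` whose removal disconnects the ends of `e`. -/
noncomputable def cycleEdges (G : MGraph V E) (T : Finset E) (e : E) : Finset E :=
  insert e (T.filter fun f => ¬ G.EndsConnected (T.erase f) e)

/-- `e ∉ T` is externally active: `T ∪ {e}` contains a cycle through `e` and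
`e` is the minimal edge of that cycle. -/
def ExtActive [LinearOrder E] (G : MGraph V E) (T : Finset E) (e : E) : Prop :=
  e ∉ T ∧ G.EndsConnected T e ∧ ∀ f ∈ G.cycleEdges T e, e ≤ f

/-- The vertex set of the component `c` of `(V, A)`. -/
noncomputable def compVerts (G : MGraph V E) (A : Finset E) (c : G.Comp A) : Finset V :=
  Finset.univ.filter fun v => (Quotient.mk (G.compSetoid A) v) = c

/-- The total vertex weight of the component `c` of `(V, A)`. -/
noncomputable def compWeight [AddCommMonoid S] (G : MGraph V E) (A : Finset E)
    (ω : V → S) (c : G.Comp A) : S :=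
  ∑ v ∈ G.compVerts A c, ω v

/-- The V-polynomial, defined by its state sum. -/
noncomputable def Vpoly [AddCommMonoid S] [CommRing R] (G : MGraph V E)
    (ω : V → S) (γ : E → R) : MvPolynomial S R :=
  ∑ A : Finset E, (∏ c : G.Comp A, MvPolynomial.X (G.compWeight A ω c)) *
    MvPolynomial.C (∏ e ∈ A, γ e)

/-- The multivariate Tutte polynomial `Z_T(G; q, γ)` as a polynomial in `q`. -/
noncomputable def ZT [CommRing R] (G : MGraph V E) (γ : E → R) : Polynomial R :=
  ∑ A : Finset E, Polynomial.X ^ (G.kA A) * Polynomial.C (∏ e ∈ A, γ e)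

/-- Deletion of the edge `e`. -/
def del (G : MGraph V E) (e : E) : MGraph V {f : E // f ≠ e} := ⟨fun f => G.ends f.1⟩

/-- Contraction of the edge `e`: vertices are the components of `(V, {e})`. -/
noncomputable def contract (G : MGraph V E) (e : E) : MGraph (G.Comp {e}) {f : E // f ≠ e} :=
  ⟨fun f => (G.ends f.1).map (Quotient.mk (G.compSetoid {e}))⟩

/-- The forest `T` with the edges of `B` contracted: vertices are the components
of `(V, B)` and edges are `T \ B`. -/
noncomputable def contractIn (G : MGraph V E) (T B : Finset E) :
    MGraph (G.Comp B) ↥(T \ B : Finset E) :=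
  ⟨fun f => (G.ends f.1).map (Quotient.mk (G.compSetoid B))⟩

/-- The edges of `G` with both ends inside `P`. -/
noncomputable def edgesIn (G : MGraph V E) (P : Finset V) : Finset E :=
  Finset.univ.filter fun e => ∀ v ∈ G.ends e, v ∈ P

/-- The subgraph of `G` induced by the vertex set `P`. -/
noncomputable def induce (G : MGraph V E) (P : Finset V) : MGraph ↥P ↥(G.edgesIn P) :=
  ⟨fun e => (G.ends e.1).pmap (fun v hv => (⟨v, hv⟩ : ↥P))
    (by have he := e.2; simp only [edgesIn, Finset.mem_filter] at he; exact he.2)⟩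

/-- The block `B` induces a connected subgraph of `G`. -/
def BlockConnected (G : MGraph V E) (B : Finset V) : Prop :=
  ∀ u ∈ B, ∀ v ∈ B, Relation.EqvGen (G.adjRel (G.edgesIn B)) u v

/-- A connected partition of `V(G)`: every vertex lies in exactly one block,
blocks are nonempty, and each block induces a connected subgraph. -/
def IsConnectedPartition (G : MGraph V E) (P : Finset (Finset V)) : Prop :=
  (∀ B ∈ P, B.Nonempty) ∧ (∀ v : V, ∃! B, B ∈ P ∧ v ∈ B) ∧ ∀ B ∈ P, G.BlockConnected B

/-- The partition `Π(A)` of `V(G)` into the components of `(V, A)`. -/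
noncomputable def partitionOf (G : MGraph V E) (A : Finset E) : Finset (Finset V) :=
  Finset.univ.image fun c : G.Comp A => G.compVerts A c

/-- The internally inactive edges of the spanning tree `T`. -/
noncomputable def intInactives [LinearOrder E] (G : MGraph V E) (T : Finset E) : Finset E :=
  T.filter fun e => ¬ G.IntActive T e

/-- The internally active edges of the spanning tree `T`. -/
noncomputable def intActives [LinearOrder E] (G : MGraph V E) (T : Finset E) : Finset E :=
  T.filter fun e => G.IntActive T e

/-- The externally active edges w.r.t. the spanning tree / forest `T`. -/
noncomputable def extActives [LinearOrder E] (G : MGraph V E) (T : Finset E) : Finset E :=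
  Finset.univ.filter fun e => G.ExtActive T e

/-- Kronecker delta `δ(σ_i, σ_j)` for the two ends of the edge `e`. -/
noncomputable def edgeDelta (G : MGraph V E) {q : ℕ} (σ : V → Fin q) (e : E) : ℂ :=
  Sym2.lift ⟨fun u v => if σ u = σ v then 1 else 0, fun u v => by simp [eq_comm]⟩ (G.ends e)

/-- The Potts partition function with variable interactions `J` and
field vectors `M`. -/
noncomputable def Zext (G : MGraph V E) (q : ℕ) (β : ℂ) (J : E → ℂ) (M : V → Fin q → ℂ) : ℂ :=
  ∑ σ : V → Fin q, Complex.exp (β * ((∑ e : E, J e * G.edgeDelta σ e) +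
    ∑ v : V, ∑ α : Fin q, M v α * (if α = σ v then 1 else 0)))

/-- The Potts partition function with constant interaction `J` and constant
field `H` favouring the first spin. -/
noncomputable def ZconstField (G : MGraph V E) (q : ℕ) (β J H : ℂ) : ℂ :=
  ∑ σ : V → Fin q, Complex.exp (β * (J * (∑ e : E, G.edgeDelta σ e) +
    H * ∑ v : V, (if (σ v : ℕ) = 0 then (1 : ℂ) else 0)))

/-- The zero-field Potts partition function with constant interaction `J`. -/
noncomputable def Zzero (G : MGraph V E) (q : ℕ) (β J : ℂ) : ℂ :=
  ∑ σ : V → Fin q, Complex.exp (β * J * ∑ e : E, G.edgeDelta σ e)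

end MGraph
namespace MGraph
set_option linter.unusedSectionVars false
set_option linter.unusedVariables false

variable {V E : Type} [Fintype V] [Fintype E] {G : MGraph V E}

theorem connects_refl {A : Finset E} (u : V) : G.Connects A u u :=
  Relation.EqvGen.refl u

theorem Connects.symm {A : Finset E} {u v : V} (h : G.Connects A u v) :
    G.Connects A v u := Relation.EqvGen.symm _ _ h

theorem Connects.trans {A : Finset E} {u v w : V} (h : G.Connects A u v)
    (h' : G.Connects A v w) : G.Connects A u w := Relation.EqvGen.trans _ _ _ h h'

theorem connects_of_mem {A : Finset E} {e : E} {x y : V} (he : e ∈ A)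
    (hxy : G.ends e = s(x, y)) : G.Connects A x y :=
  Relation.EqvGen.rel _ _ ⟨e, he, hxy⟩

theorem Connects.mono {A B : Finset E} (hAB : A ⊆ B) {u v : V}
    (h : G.Connects A u v) : G.Connects B u v :=
  Relation.EqvGen.mono (r := G.adjRel A) (p := G.adjRel B)
    (fun a b ⟨e, he, hxy⟩ => ⟨e, hAB he, hxy⟩) u v h

theorem connects_empty {u v : V} (h : G.Connects (∅ : Finset E) u v) : u = v := by
  induction h with
  | rel _ _ h => exact absurd h.choose_spec.1 (by simp)
  | refl => rfl
  | symm _ _ _ ih => exact ih.symm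
  | trans _ _ _ _ _ ih1 ih2 => exact ih1.trans ih2

theorem ends_exists (G : MGraph V E) (e : E) : ∃ x y, G.ends e = s(x, y) := by
  obtain ⟨⟨x, y⟩, h⟩ := Quot.exists_rep (G.ends e)
  exact ⟨x, y, h.symm⟩

theorem endsConnected_iff {A : Finset E} {e : E} {x y : V}
    (hxy : G.ends e = s(x, y)) : G.EndsConnected A e ↔ G.Connects A x y := by
  constructor
  · rintro ⟨u, v, huv, hc⟩
    rw [hxy, Sym2.eq_iff] at huv
    rcases huv with ⟨rfl, rfl⟩ | ⟨rfl, rfl⟩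
    · exact hc
    · exact hc.symm
  · exact fun hc => ⟨x, y, hxy, hc⟩

theorem EndsConnected.mono {A B : Finset E} (hAB : A ⊆ B) {e : E}
    (h : G.EndsConnected A e) : G.EndsConnected B e := by
  obtain ⟨u, v, huv, hc⟩ := h
  exact ⟨u, v, huv, hc.mono hAB⟩

/-- Key decomposition lemma for connectivity after inserting one edge. -/
theorem connects_insert_iff {A : Finset E} {e : E} {x y : V}
    (hxy : G.ends e = s(x, y)) {u v : V} :
    G.Connects (insert e A) u v ↔ G.Connects A u v ∨
      (G.Connects A u x ∧ G.Connects A y v) ∨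
      (G.Connects A u y ∧ G.Connects A x v) := by
  constructor
  · intro h
    induction h with
    | rel a b hab =>
      obtain ⟨f, hf, hfab⟩ := hab
      rcases Finset.mem_insert.mp hf with rfl | hf
      · rw [hxy, Sym2.eq_iff] at hfab
        rcases hfab with ⟨rfl, rfl⟩ | ⟨rfl, rfl⟩
        · exact Or.inr (Or.inl ⟨connects_refl _, connects_refl _⟩)
        · exact Or.inr (Or.inr ⟨connects_refl _, connects_refl _⟩)
      · exact Or.inl (connects_of_mem hf hfab)
    | refl a => exact Or.inl (connects_refl a)
    | symm a b _ ih =>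
      rcases ih with h | ⟨h1, h2⟩ | ⟨h1, h2⟩
      · exact Or.inl h.symm
      · exact Or.inr (Or.inr ⟨h2.symm, h1.symm⟩)
      · exact Or.inr (Or.inl ⟨h2.symm, h1.symm⟩)
    | trans a b c _ _ ih1 ih2 =>
      rcases ih1 with h | ⟨h1, h2⟩ | ⟨h1, h2⟩ <;>
        rcases ih2 with h' | ⟨h1', h2'⟩ | ⟨h1', h2'⟩
      · exact Or.inl (h.trans h')
      · exact Or.inr (Or.inl ⟨h.trans h1', h2'⟩)
      · exact Or.inr (Or.inr ⟨h.trans h1', h2'⟩)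
      · exact Or.inr (Or.inl ⟨h1, h2.trans h'⟩)
      · exact Or.inr (Or.inl ⟨h1, h2'⟩)
      · exact Or.inl (h1.trans h2')
      · exact Or.inr (Or.inr ⟨h1, h2.trans h'⟩)
      · exact Or.inl (h1.trans h2')
      · exact Or.inr (Or.inr ⟨h1, h2'⟩)
  · rintro (h | ⟨h1, h2⟩ | ⟨h1, h2⟩)
    · exact h.mono (Finset.subset_insert _ _)
    · exact ((h1.mono (Finset.subset_insert _ _)).trans
        (connects_of_mem (Finset.mem_insert_self _ _) hxy)).trans
        (h2.mono (Finset.subset_insert _ _))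
    · exact ((h1.mono (Finset.subset_insert _ _)).trans
        (connects_of_mem (Finset.mem_insert_self _ _) (hxy.trans (Sym2.eq_swap)))).trans
        (h2.mono (Finset.subset_insert _ _))

end MGraph
namespace MGraph
set_option linter.unusedSectionVars false

variable {V E : Type} [Fintype V] [Fintype E] {G : MGraph V E}

theorem connects_insert_of_endsConnected {A : Finset E} {e : E}
    (he : G.EndsConnected A e) {u v : V} :
    G.Connects (insert e A) u v ↔ G.Connects A u v := by
  obtain ⟨x, y, hxy, hc⟩ := he
  rw [connects_insert_iff hxy]
  constructor
  · rintro (h | ⟨h1, h2⟩ | ⟨h1, h2⟩)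
    · exact h
    · exact (h1.trans hc).trans h2
    · exact (h1.trans hc.symm).trans h2
  · exact Or.inl

/-- Path crossing: a connection in `S` between vertices separated in `W`
must use an edge of `S` whose own ends are separated in `W`. -/
theorem connects_cross {S W : Finset E} {u v : V} (h : G.Connects S u v)
    (hW : ¬ G.Connects W u v) :
    ∃ f ∈ S, ∃ x y, G.ends f = s(x, y) ∧ ¬ G.Connects W x y := by
  induction h with
  | rel a b hab =>
    obtain ⟨f, hf, hfab⟩ := hab
    exact ⟨f, hf, a, b, hfab, hW⟩
  | refl a => exact absurd (connects_refl a) hW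
  | symm a b _ ih => exact ih (fun hc => hW hc.symm)
  | trans a b c _ _ ih1 ih2 =>
    by_cases hab : G.Connects W a b
    · exact ih2 (fun hc => hW (hab.trans hc))
    · exact ih1 hab

theorem IsForest.subset {A B : Finset E} (hAB : A ⊆ B) (hB : G.IsForest B) :
    G.IsForest A := fun e he hc =>
  hB e (hAB he) (hc.mono (Finset.erase_subset_erase _ hAB))

theorem mem_of_endsConnected_self {F : Finset E} {e : E} (he : e ∈ F) :
    G.EndsConnected F e := by
  obtain ⟨x, y, hxy⟩ := ends_exists G e
  exact ⟨x, y, hxy, connects_of_mem he hxy⟩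

theorem isForest_insert {F : Finset E} (hF : G.IsForest F) {e : E}
    (he : ¬ G.EndsConnected F e) : G.IsForest (insert e F) := by
  have heF : e ∉ F := fun h => he (mem_of_endsConnected_self h)
  intro g hg hc
  rcases Finset.mem_insert.mp hg with rfl | hgF
  · rw [Finset.erase_insert heF] at hc
    exact he hc
  · have hge : g ≠ e := fun h => heF (h ▸ hgF)
    rw [Finset.erase_insert_of_ne hge.symm] at hc
    obtain ⟨a, b, hab, hcon⟩ := hc
    obtain ⟨x, y, hxy⟩ := ends_exists G e
    rw [connects_insert_iff hxy] at hcon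
    have lift : ∀ {c d : V}, G.Connects (F.erase g) c d → G.Connects F c d :=
      fun h => h.mono (Finset.erase_subset _ _)
    rcases hcon with h | ⟨h1, h2⟩ | ⟨h1, h2⟩
    · exact hF g hgF ⟨a, b, hab, h⟩
    · exact he ⟨x, y, hxy,
        ((lift h1).symm.trans (connects_of_mem hgF hab)).trans (lift h2).symm⟩
    · exact he ⟨x, y, hxy,
        ((lift h2).trans (connects_of_mem hgF hab).symm).trans (lift h1)⟩

/-- In a forest, if `u,v` are connected avoiding `f` and avoiding `g`, they are
connected avoiding both. -/
theorem forest_avoid_two {F : Finset E} (hF : G.IsForest F) {f g : E} {u v : V}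
    (hf : G.Connects (F.erase f) u v) (hg : G.Connects (F.erase g) u v) :
    G.Connects ((F.erase g).erase f) u v := by
  by_contra hW
  by_cases hgF : g ∈ F
  · by_cases hfg : g = f
    · subst hfg
      exact hW (by rw [Finset.erase_idem]; exact hg)
    · have hgf : g ∈ F.erase f := Finset.mem_erase.mpr ⟨hfg, hgF⟩
      have hrw : F.erase f = insert g ((F.erase g).erase f) := by
        rw [Finset.erase_right_comm]
        exact (Finset.insert_erase hgf).symm
      obtain ⟨a, b, hab⟩ := ends_exists G g
      rw [hrw, connects_insert_iff hab] at hf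
      have hconn : ∀ {a b : V}, G.Connects ((F.erase g).erase f) a b →
          G.Connects (F.erase g) a b :=
        fun h => h.mono (Finset.erase_subset _ _)
      rcases hf with h | ⟨h1, h2⟩ | ⟨h1, h2⟩
      · exact hW h
      · exact hF g hgF ⟨a, b, hab, ((hconn h1).symm.trans hg).trans (hconn h2).symm⟩
      · exact hF g hgF ⟨b, a, hab.trans Sym2.eq_swap,
          ((hconn h1).symm.trans hg).trans (hconn h2).symm⟩
  · exact hW (by rwa [Finset.erase_eq_of_notMem hgF])

/-- In a forest, a connection between `u` and `v` is realized within the set of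
edges that are bridges for the pair `(u,v)`. -/
theorem forest_support {F : Finset E} (hF : G.IsForest F) {u v : V}
    (h : G.Connects F u v) :
    G.Connects (F.filter fun f => ¬ G.Connects (F.erase f) u v) u v := by
  have key : ∀ n (F : Finset E), F.card = n → G.IsForest F → G.Connects F u v →
      G.Connects (F.filter fun f => ¬ G.Connects (F.erase f) u v) u v := by
    intro n
    induction n using Nat.strong_induction_on with
    | _ n ih =>
      intro F hn hF h
      by_cases hall : ∀ f ∈ F, ¬ G.Connects (F.erase f) u v
      · rwa [Finset.filter_true_of_mem hall]
      · push_neg at hall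
        obtain ⟨g, hgF, hg⟩ := hall
        have hcard : (F.erase g).card < n := hn ▸ Finset.card_erase_lt_of_mem hgF
        have hrec := ih _ hcard _ rfl (hF.subset (Finset.erase_subset _ _)) hg
        refine hrec.mono (fun f hf => ?_)
        rw [Finset.mem_filter] at hf ⊢
        obtain ⟨hf1, hf2⟩ := hf
        refine ⟨Finset.mem_of_mem_erase hf1, fun hc => hf2 ?_⟩
        exact forest_avoid_two hF hc hg
  exact key F.card F rfl hF h

end MGraph
namespace MGraph
set_option linter.unusedSectionVars false

variable {V E : Type} [Fintype V] [Fintype E] {G : MGraph V E}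

theorem kA_congr {A B : Finset E}
    (h : ∀ u v, G.Connects A u v ↔ G.Connects B u v) : G.kA A = G.kA B := by
  unfold kA Comp
  have hs : G.compSetoid A = G.compSetoid B := Setoid.ext h
  rw [hs]

theorem kA_insert_of_endsConnected {A : Finset E} {e : E}
    (he : G.EndsConnected A e) : G.kA (insert e A) = G.kA A :=
  kA_congr fun _ _ => connects_insert_of_endsConnected he

theorem kA_empty : G.kA (∅ : Finset E) = Fintype.card V := by
  have : Function.Bijective (Quotient.mk (G.compSetoid (∅ : Finset E))) := by
    constructor
    · intro a b h
      exact connects_empty (Quotient.eq''.mp h)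
    · exact Quot.exists_rep
  rw [kA, ← Nat.card_eq_fintype_card]
  exact (Nat.card_eq_of_bijective _ this).symm

/-- Inserting an edge joining two different components decreases `k` by one. -/
theorem kA_insert_of_not_endsConnected {A : Finset E} {e : E}
    (he : ¬ G.EndsConnected A e) : G.kA (insert e A) + 1 = G.kA A := by
  obtain ⟨x, y, hxy⟩ := ends_exists G e
  have hnxy : ¬ G.Connects A x y := fun h => he ⟨x, y, hxy, h⟩
  have hmap : ∀ a b : V, (G.compSetoid A) a b →
      (G.compSetoid (insert e A)) (id a) (id b) :=
    fun a b hab => Connects.mono (Finset.subset_insert _ _) hab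
  set φ : Quotient (G.compSetoid A) → Quotient (G.compSetoid (insert e A)) :=
    Quotient.map id hmap with hφ
  have hφmk : ∀ w : V, φ (Quotient.mk _ w) = Quotient.mk _ w := fun w => rfl
  have hdec : ∀ {z w : V}, G.Connects (insert e A) z w ↔
      (G.Connects A z w ∨ (G.Connects A z x ∧ G.Connects A y w) ∨
       (G.Connects A z y ∧ G.Connects A x w)) := fun {z w} => connects_insert_iff hxy
  have hmkeq : ∀ {z w : V}, (Quotient.mk (G.compSetoid A) z = Quotient.mk _ w) ↔
      G.Connects A z w := fun {z w} => by rw [Quotient.eq]; exact Iff.rfl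
  have hmkeq' : ∀ {z w : V},
      (Quotient.mk (G.compSetoid (insert e A)) z = Quotient.mk _ w) ↔
      G.Connects (insert e A) z w := fun {z w} => by rw [Quotient.eq]; exact Iff.rfl
  have hcard := Finset.card_eq_sum_card_fiberwise
    (f := φ) (s := Finset.univ) (t := Finset.univ) (fun c _ => Finset.mem_univ _)
  have hfib : ∀ c : Quotient (G.compSetoid (insert e A)),
      (Finset.univ.filter fun d => φ d = c).card =
        if c = Quotient.mk _ x then 2 else 1 := by
    intro c
    obtain ⟨w, rfl⟩ := Quotient.exists_rep c
    by_cases hcx : G.Connects (insert e A) w x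
    · rw [if_pos (hmkeq'.mpr hcx)]
      have hwxy : G.Connects A w x ∨ G.Connects A w y := by
        rcases hdec.mp hcx with h | ⟨h1, h2⟩ | ⟨h1, h2⟩
        · exact Or.inl h
        · exact Or.inl h1
        · exact Or.inr h1
      have hset : (Finset.univ.filter fun d => φ d = Quotient.mk _ w) =
          {Quotient.mk (G.compSetoid A) x, Quotient.mk (G.compSetoid A) y} := by
        ext d
        obtain ⟨z, rfl⟩ := Quotient.exists_rep d
        simp only [Finset.mem_filter, Finset.mem_univ, true_and, hφmk,
          Finset.mem_insert, Finset.mem_singleton]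
        rw [hmkeq', hmkeq, hmkeq, hdec]
        constructor
        · rintro (h | ⟨h1, h2⟩ | ⟨h1, h2⟩)
          · rcases hwxy with hw | hw
            · exact Or.inl (h.trans hw)
            · exact Or.inr (h.trans hw)
          · exact Or.inl h1
          · exact Or.inr h1
        · rintro (h | h) <;> rcases hwxy with hw | hw
          · exact Or.inl (h.trans hw.symm)
          · exact Or.inr (Or.inl ⟨h, hw.symm⟩)
          · exact Or.inr (Or.inr ⟨h, hw.symm⟩)
          · exact Or.inl (h.trans hw.symm)
      rw [hset, Finset.card_insert_of_notMem, Finset.card_singleton]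
      simp only [Finset.mem_singleton]
      rw [hmkeq]
      exact hnxy
    · rw [if_neg (fun h => hcx (hmkeq'.mp h))]
      have hset : (Finset.univ.filter fun d => φ d = Quotient.mk _ w) =
          {Quotient.mk (G.compSetoid A) w} := by
        ext d
        obtain ⟨z, rfl⟩ := Quotient.exists_rep d
        simp only [Finset.mem_filter, Finset.mem_univ, true_and, hφmk,
          Finset.mem_singleton]
        rw [hmkeq', hmkeq, hdec]
        constructor
        · rintro (h | ⟨h1, h2⟩ | ⟨h1, h2⟩)
          · exact h
          · exact absurd (hdec.mpr (Or.inr (Or.inr ⟨h2.symm, connects_refl x⟩)))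
              hcx
          · exact absurd (hdec.mpr (Or.inl h2.symm)) hcx
        · exact Or.inl
      rw [hset, Finset.card_singleton]
  rw [Finset.sum_congr rfl (fun c _ => hfib c)] at hcard
  have hsum : (∑ c : Quotient (G.compSetoid (insert e A)),
      if c = Quotient.mk _ x then 2 else 1) =
      Fintype.card (Quotient (G.compSetoid (insert e A))) + 1 := by
    have step : ∀ c : Quotient (G.compSetoid (insert e A)),
        (if c = Quotient.mk _ x then 2 else 1) =
        1 + (if c = Quotient.mk (G.compSetoid (insert e A)) x then 1 else 0) := by
      intro c; split <;> rfl
    rw [Finset.sum_congr rfl (fun c _ => step c), Finset.sum_add_distrib,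
      Finset.sum_const, Finset.sum_ite_eq' Finset.univ _ (fun _ => (1 : ℕ)),
      if_pos (Finset.mem_univ _)]
    rw [smul_eq_mul, mul_one, Finset.card_univ]
  rw [hsum, Finset.card_univ] at hcard
  unfold kA
  show Nat.card (Quotient (G.compSetoid (insert e A))) + 1 = Nat.card (Quotient (G.compSetoid A))
  rw [Nat.card_eq_fintype_card, Nat.card_eq_fintype_card]
  omega

/-- A forest with `m` edges has `|V| - m` components. -/
theorem forest_card {F : Finset E} (hF : G.IsForest F) :
    G.kA F + F.card = Fintype.card V := by
  have key : ∀ n (F : Finset E), F.card = n → G.IsForest F →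
      G.kA F + F.card = Fintype.card V := by
    intro n
    induction n with
    | zero =>
      intro F hn _
      rw [Finset.card_eq_zero.mp hn]
      simp [kA_empty]
    | succ n ih =>
      intro F hn hF
      obtain ⟨e, he⟩ := Finset.card_pos.mp (show 0 < F.card by omega)
      have hins : insert e (F.erase e) = F := Finset.insert_erase he
      have hne : ¬ G.EndsConnected (F.erase e) e := hF e he
      have hmerge := kA_insert_of_not_endsConnected (G := G) hne
      rw [hins] at hmerge
      have hcard : (F.erase e).card = n := by
        rw [Finset.card_erase_of_mem he, hn]; rfl
      have := ih (F.erase e) hcard (hF.subset (Finset.erase_subset _ _))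
      omega
  exact key F.card F rfl hF

end MGraph
namespace MGraph
set_option linter.unusedSectionVars false

variable {V E : Type} [Fintype V] [Fintype E] {G : MGraph V E}

theorem IsSpanningTree.kA_eq {T : Finset E} (hT : G.IsSpanningTree T) :
    G.kA T = G.kA Finset.univ := kA_congr hT.2

theorem endsConnected_univ (G : MGraph V E) (e : E) :
    G.EndsConnected Finset.univ e := mem_of_endsConnected_self (Finset.mem_univ e)

theorem IsSpanningTree.endsConnected {T : Finset E} (hT : G.IsSpanningTree T)
    (e : E) : G.EndsConnected T e := by
  obtain ⟨x, y, hxy, hc⟩ := G.endsConnected_univ e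
  exact ⟨x, y, hxy, (hT.2 x y).mpr hc⟩

/-- Exchange: replacing an edge of a maximal spanning forest by an edge
reconnecting the two pieces gives a maximal spanning forest. -/
theorem IsSpanningTree.exchange {T : Finset E} (hT : G.IsSpanningTree T) {e f : E}
    (he : e ∈ T) (hf : ¬ G.EndsConnected (T.erase e) f) :
    G.IsSpanningTree (insert f (T.erase e)) := by
  obtain ⟨a, b, hab⟩ := ends_exists G e
  obtain ⟨x, y, hxy⟩ := ends_exists G f
  have hforest : G.IsForest (insert f (T.erase e)) :=
    isForest_insert (hT.1.subset (Finset.erase_subset _ _)) hf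
  refine ⟨hforest, fun u v => ⟨fun h => h.mono (Finset.subset_univ _), fun h => ?_⟩⟩
  have hTc : G.Connects T u v := (hT.2 u v).mpr h
  -- first: the two ends of e are connected in insert f (T.erase e)
  have hxyT : G.Connects T x y := (hT.2 x y).mpr (connects_of_mem (Finset.mem_univ f) hxy)
  have hnxy : ¬ G.Connects (T.erase e) x y := fun hc => hf ⟨x, y, hxy, hc⟩
  have hTeq : T = insert e (T.erase e) := (Finset.insert_erase he).symm
  rw [hTeq, connects_insert_iff hab] at hxyT
  have hmonoW : ∀ {c d : V}, G.Connects (T.erase e) c d →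
      G.Connects (insert f (T.erase e)) c d :=
    fun h => h.mono (Finset.subset_insert _ _)
  have hfedge : G.Connects (insert f (T.erase e)) x y :=
    connects_of_mem (Finset.mem_insert_self _ _) hxy
  have habW : G.Connects (insert f (T.erase e)) a b := by
    rcases hxyT with h | ⟨h1, h2⟩ | ⟨h1, h2⟩
    · exact absurd h hnxy
    · exact ((hmonoW h1).symm.trans hfedge).trans (hmonoW h2).symm
    · exact ((hmonoW h2).trans hfedge.symm).trans (hmonoW h1)
  rw [hTeq, connects_insert_iff hab] at hTc
  rcases hTc with h | ⟨h1, h2⟩ | ⟨h1, h2⟩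
  · exact hmonoW h
  · exact ((hmonoW h1).trans habW).trans (hmonoW h2)
  · exact ((hmonoW h1).trans habW.symm).trans (hmonoW h2)

theorem not_endsConnected_of_not_connects {A : Finset E} {e : E} {x y : V}
    (hxy : G.ends e = s(x, y)) (h : ¬ G.Connects A x y) :
    ¬ G.EndsConnected A e := fun hc => h ((endsConnected_iff hxy).mp hc)

end MGraph
namespace MGraph
set_option linter.unusedSectionVars false

variable {V E : Type} [Fintype V] [Fintype E] {G : MGraph V E} {p : E → ℕ}

/-- Edges of priority at least `n`. -/
noncomputable def upSet [Fintype E] (p : E → ℕ) (n : ℕ) : Finset E :=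
  Finset.univ.filter fun f => n ≤ p f

/-- Edges of priority strictly greater than that of `e`. -/
noncomputable def hiSet [Fintype E] (p : E → ℕ) (e : E) : Finset E :=
  upSet p (p e + 1)

/-- The greedy maximal spanning forest with respect to the priority `p`. -/
noncomputable def gtree (G : MGraph V E) (p : E → ℕ) : Finset E :=
  Finset.univ.filter fun e => ¬ G.EndsConnected (hiSet p e) e

theorem mem_gtree_iff {p : E → ℕ} {e : E} :
    e ∈ G.gtree p ↔ ¬ G.EndsConnected (hiSet p e) e := by
  simp [gtree]

theorem mem_upSet {p : E → ℕ} {n : ℕ} {f : E} : f ∈ upSet p n ↔ n ≤ p f := by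
  simp [upSet]

theorem mem_hiSet {p : E → ℕ} {e f : E} : f ∈ hiSet p e ↔ p e < p f := by
  simp [hiSet, upSet, Nat.succ_le]

/-- Connectivity among high-priority edges is realized inside the greedy forest. -/
theorem gtree_connects (hp : Function.Injective p) :
    ∀ (n : ℕ) (u v : V), G.Connects (upSet p n) u v →
      G.Connects (G.gtree p ∩ upSet p n) u v := by
  have key : ∀ (k n : ℕ), (upSet p n).card ≤ k → ∀ u v,
      G.Connects (upSet p n) u v → G.Connects (G.gtree p ∩ upSet p n) u v := by
    intro k
    induction k with
    | zero =>
      intro n hcard u v h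
      rw [Finset.card_eq_zero.mp (Nat.le_zero.mp hcard)] at h
      rw [connects_empty h]
      exact connects_refl v
    | succ k ih =>
      intro n hcard u v h
      rcases Finset.eq_empty_or_nonempty (upSet p n) with hemp | hne
      · rw [hemp] at h
        rw [connects_empty h]
        exact connects_refl v
      · -- pick the minimal-priority edge of upSet p n
        obtain ⟨e, he, hemin⟩ := Finset.exists_min_image (upSet p n) p hne
        set m := p e + 1 with hm
        have hsub : upSet p m = (upSet p n).erase e := by
          ext f
          simp only [mem_upSet, Finset.mem_erase]
          constructor
          · intro hf
            have hf' : p e + 1 ≤ p f := hm ▸ hf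
            exact ⟨fun hfe => by rw [hfe] at hf'; omega,
              le_trans (mem_upSet.mp he) (by omega)⟩
          · rintro ⟨hfe, hfn⟩
            have := hemin f (mem_upSet.mpr hfn)
            rcases lt_or_eq_of_le this with h' | h'
            · omega
            · exact absurd (hp h').symm hfe
        have hins : upSet p n = insert e (upSet p m) := by
          rw [hsub, Finset.insert_erase he]
        have hcard' : (upSet p m).card ≤ k := by
          rw [hsub]
          have := Finset.card_erase_of_mem he
          omega
        have hmono2 : G.gtree p ∩ upSet p m ⊆ G.gtree p ∩ upSet p n := by
          rw [hsub]
          exact Finset.inter_subset_inter (le_refl _)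
            (Finset.erase_subset _ _)
        obtain ⟨x, y, hxy⟩ := ends_exists G e
        rw [hins, connects_insert_iff hxy] at h
        by_cases heT : e ∈ G.gtree p
        · have hemem : e ∈ G.gtree p ∩ upSet p n := Finset.mem_inter.mpr ⟨heT, he⟩
          have hedge : G.Connects (G.gtree p ∩ upSet p n) x y :=
            connects_of_mem hemem hxy
          rcases h with h | ⟨h1, h2⟩ | ⟨h1, h2⟩
          · exact (ih m hcard' u v h).mono hmono2
          · exact (((ih m hcard' u x h1).mono hmono2).trans hedge).trans
              ((ih m hcard' y v h2).mono hmono2)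
          · exact (((ih m hcard' u y h1).mono hmono2).trans hedge.symm).trans
              ((ih m hcard' x v h2).mono hmono2)
        · have hEC : G.EndsConnected (upSet p m) e := by
            by_contra hc
            exact heT (mem_gtree_iff.mpr hc)
          have hcxy : G.Connects (upSet p m) x y := (endsConnected_iff hxy).mp hEC
          have hall : G.Connects (upSet p m) u v := by
            rcases h with h | ⟨h1, h2⟩ | ⟨h1, h2⟩
            · exact h
            · exact (h1.trans hcxy.symm.symm).trans h2
            · exact (h1.trans hcxy.symm).trans h2
          exact (ih m hcard' u v hall).mono hmono2
  intro n u v h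
  exact key (upSet p n).card n (le_refl _) u v h

theorem gtree_connects_univ (hp : Function.Injective p) {u v : V}
    (h : G.Connects Finset.univ u v) : G.Connects (G.gtree p) u v := by
  have h0 : upSet p 0 = Finset.univ := by
    ext f; simp [mem_upSet]
  have := gtree_connects hp 0 u v (h0 ▸ h)
  rwa [h0, Finset.inter_univ] at this

/-- The greedy forest is a forest. -/
theorem gtree_forest (hp : Function.Injective p) : G.IsForest (G.gtree p) := by
  have key : ∀ (k n : ℕ), (upSet p n).card ≤ k →
      G.IsForest (G.gtree p ∩ upSet p n) := by
    intro k
    induction k with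
    | zero =>
      intro n hcard
      rw [Finset.card_eq_zero.mp (Nat.le_zero.mp hcard), Finset.inter_empty]
      intro e he
      exact absurd he (Finset.notMem_empty e)
    | succ k ih =>
      intro n hcard
      rcases Finset.eq_empty_or_nonempty (upSet p n) with hemp | hne
      · rw [hemp, Finset.inter_empty]
        intro e he
        exact absurd he (Finset.notMem_empty e)
      · obtain ⟨e, he, hemin⟩ := Finset.exists_min_image (upSet p n) p hne
        set m := p e + 1 with hm
        have hsub : upSet p m = (upSet p n).erase e := by
          ext f
          simp only [mem_upSet, Finset.mem_erase]
          constructor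
          · intro hf
            have hf' : p e + 1 ≤ p f := hm ▸ hf
            exact ⟨fun hfe => by rw [hfe] at hf'; omega,
              le_trans (mem_upSet.mp he) (by omega)⟩
          · rintro ⟨hfe, hfn⟩
            have := hemin f (mem_upSet.mpr hfn)
            rcases lt_or_eq_of_le this with h' | h'
            · omega
            · exact absurd (hp h').symm hfe
        have hcard' : (upSet p m).card ≤ k := by
          rw [hsub]
          have := Finset.card_erase_of_mem he
          omega
        have hforest := ih m hcard'
        by_cases heT : e ∈ G.gtree p
        · have hinter : G.gtree p ∩ upSet p n =
              insert e (G.gtree p ∩ upSet p m) := by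
            rw [hsub]
            ext f
            simp only [Finset.mem_inter, Finset.mem_insert, Finset.mem_erase]
            constructor
            · rintro ⟨hf1, hf2⟩
              by_cases hfe : f = e
              · exact Or.inl hfe
              · exact Or.inr ⟨hf1, hfe, hf2⟩
            · rintro (rfl | ⟨hf1, _, hf2⟩)
              · exact ⟨heT, he⟩
              · exact ⟨hf1, hf2⟩
          rw [hinter]
          refine isForest_insert hforest ?_
          have hec : ¬ G.EndsConnected (upSet p m) e := mem_gtree_iff.mp heT
          exact fun hc => hec (hc.mono
            (Finset.inter_subset_right))
        · have hinter : G.gtree p ∩ upSet p n = G.gtree p ∩ upSet p m := by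
            rw [hsub]
            ext f
            simp only [Finset.mem_inter, Finset.mem_erase]
            constructor
            · rintro ⟨hf1, hf2⟩
              exact ⟨hf1, fun hfe => heT (hfe ▸ hf1), hf2⟩
            · rintro ⟨hf1, _, hf2⟩
              exact ⟨hf1, hf2⟩
          rw [hinter]
          exact hforest
  have h0 : upSet p 0 = Finset.univ := by
    ext f; simp [mem_upSet]
  have := key (upSet p 0).card 0 (le_refl _)
  rwa [h0, Finset.inter_univ] at this

/-- The greedy forest is a maximal spanning forest. -/
theorem gtree_spanning (hp : Function.Injective p) :
    G.IsSpanningTree (G.gtree p) :=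
  ⟨gtree_forest hp, fun u v =>
    ⟨fun h => h.mono (Finset.subset_univ _), gtree_connects_univ hp⟩⟩

end MGraph
namespace MGraph
set_option linter.unusedSectionVars false
set_option linter.unusedVariables false

variable {V E : Type} [Fintype V] [Fintype E] {G : MGraph V E} {p : E → ℕ}

/-- (G1): for `e` outside the greedy forest, every edge of its fundamental
cycle has higher priority. -/
theorem gtree_cycle_priority (hp : Function.Injective p) {e f : E}
    (he : e ∉ G.gtree p) (hf : f ∈ G.gtree p)
    (hcyc : ¬ G.EndsConnected ((G.gtree p).erase f) e) : p e < p f := by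
  by_contra hle
  push_neg at hle
  have hne : f ≠ e := fun h => he (h ▸ hf)
  have hlt : p f < p e := lt_of_le_of_ne hle (fun h => hne (hp h))
  have hEC : G.EndsConnected (hiSet p e) e := by
    by_contra hc
    exact he (mem_gtree_iff.mpr hc)
  obtain ⟨x, y, hxy, hc⟩ := hEC
  have := gtree_connects hp (p e + 1) x y hc
  have hsub : G.gtree p ∩ upSet p (p e + 1) ⊆ (G.gtree p).erase f := by
    intro g hg
    rw [Finset.mem_inter, mem_upSet] at hg
    refine Finset.mem_erase.mpr ⟨fun hgf => ?_, hg.1⟩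
    rw [hgf] at hg
    omega
  exact hcyc ⟨x, y, hxy, this.mono hsub⟩

/-- (G2): for `e` in the greedy forest, every edge that can replace it has
lower priority. -/
theorem gtree_cut_priority (hp : Function.Injective p) {e f : E}
    (he : e ∈ G.gtree p) (hne : f ≠ e)
    (hf : G.IsSpanningTree (insert f ((G.gtree p).erase e))) : p f < p e := by
  by_contra hle
  push_neg at hle
  have hlt : p e < p f := lt_of_le_of_ne hle (fun h => hne (hp h.symm))
  set T := G.gtree p with hT
  obtain ⟨x, y, hxy⟩ := ends_exists G e
  have hnxy : ¬ G.Connects (T.erase e) x y :=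
    fun h => gtree_forest hp e he ⟨x, y, hxy, h⟩
  -- f is not in T.erase e
  by_cases hfT : f ∈ T.erase e
  · rw [Finset.insert_eq_self.mpr hfT] at hf
    exact hnxy ((hf.2 x y).mpr (connects_of_mem (Finset.mem_univ e) hxy))
  · -- f ∉ gtree p (since f ≠ e and f ∉ T.erase e)
    have hfgt : f ∉ T := fun h => hfT (Finset.mem_erase.mpr ⟨hne, h⟩)
    have hEC : G.EndsConnected (hiSet p f) f := by
      by_contra hc
      exact hfgt (mem_gtree_iff.mpr hc)
    obtain ⟨a, b, hab, hcab⟩ := hEC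
    -- the ends of f are connected using higher priority edges than e, inside T
    have hcab' : G.Connects (upSet p (p e + 1)) a b :=
      hcab.mono (fun g hg => by
        rw [mem_hiSet] at hg
        rw [mem_upSet]
        omega)
    have h2 := gtree_connects hp (p e + 1) a b hcab'
    have hsub : T ∩ upSet p (p e + 1) ⊆ T.erase e := by
      intro g hg
      rw [Finset.mem_inter, mem_upSet] at hg
      refine Finset.mem_erase.mpr ⟨fun hgf => ?_, hg.1⟩
      rw [hgf] at hg
      omega
    have hfred : G.EndsConnected (T.erase e) f := ⟨a, b, hab, h2.mono hsub⟩
    -- then insert f (T.erase e) has the same connectivity as T.erase e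
    have := (hf.2 x y).mpr (connects_of_mem (Finset.mem_univ e) hxy)
    rw [connects_insert_of_endsConnected hfred] at this
    exact hnxy this

end MGraph
namespace MGraph
set_option linter.unusedSectionVars false
set_option linter.unusedVariables false

variable {V E : Type} [Fintype V] [Fintype E] [LinearOrder E] {G : MGraph V E}

noncomputable def idxE (e : E) : ℕ := (Finset.univ.filter (· < e)).card

theorem idxE_lt_card (e : E) : idxE e < Fintype.card E := by
  rw [← Finset.card_univ]
  apply Finset.card_lt_card
  refine ⟨Finset.filter_subset _ _, fun hsub => ?_⟩
  have := hsub (Finset.mem_univ e)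
  rw [Finset.mem_filter] at this
  exact lt_irrefl e this.2

theorem idxE_lt_iff {e f : E} : idxE e < idxE f ↔ e < f := by
  constructor
  · intro h
    by_contra hle
    push_neg at hle
    refine absurd (Finset.card_le_card (fun a ha => ?_)) (not_le.mpr h)
    rw [Finset.mem_filter] at ha ⊢
    exact ⟨ha.1, lt_of_lt_of_le ha.2 hle⟩
  · intro h
    apply Finset.card_lt_card
    refine ⟨fun a ha => ?_, fun hsub => ?_⟩
    · rw [Finset.mem_filter] at ha ⊢
      exact ⟨ha.1, ha.2.trans h⟩
    · have := hsub (Finset.mem_filter.mpr ⟨Finset.mem_univ e, h⟩)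
      rw [Finset.mem_filter] at this
      exact lt_irrefl e this.2

theorem idxE_inj : Function.Injective (idxE (E := E)) := by
  intro e f h
  by_contra hne
  rcases lt_or_gt_of_ne hne with h' | h'
  · exact absurd (idxE_lt_iff.mpr h') (by omega)
  · exact absurd (idxE_lt_iff.mpr h') (by omega)

/-- The priority function implementing Traldi's order: edges of `A` come first
(among them, larger edges have higher priority); edges outside `A` come last
(among them, smaller edges have higher priority). -/
noncomputable def pE (A : Finset E) (e : E) : ℕ :=
  if e ∈ A then Fintype.card E + 1 + idxE e else Fintype.card E - idxE e

theorem pE_inj (A : Finset E) : Function.Injective (pE A) := by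
  intro e f h
  unfold pE at h
  have he := idxE_lt_card e
  have hf := idxE_lt_card f
  by_cases h1 : e ∈ A <;> by_cases h2 : f ∈ A <;> simp [h1, h2] at h <;>
    [skip; omega; omega; skip] <;> exact idxE_inj (by omega)

theorem pE_mem_of_gt {A : Finset E} {e f : E} (he : e ∈ A)
    (h : pE A e < pE A f) : f ∈ A := by
  by_contra hf
  unfold pE at h
  rw [if_pos he, if_neg hf] at h
  have := idxE_lt_card f
  omega

theorem pE_lt_iff_of_mem {A : Finset E} {e f : E} (he : e ∈ A) (hf : f ∈ A) :
    pE A e < pE A f ↔ e < f := by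
  unfold pE
  rw [if_pos he, if_pos hf]
  constructor
  · intro h
    exact idxE_lt_iff.mp (by omega)
  · intro h
    have := idxE_lt_iff.mpr h
    omega

theorem pE_lt_iff_of_not_mem {A : Finset E} {e f : E} (he : e ∉ A) (hf : f ∉ A) :
    pE A e < pE A f ↔ f < e := by
  unfold pE
  rw [if_neg he, if_neg hf]
  have h1 := idxE_lt_card e
  have h2 := idxE_lt_card f
  constructor
  · intro h
    exact idxE_lt_iff.mp (by omega)
  · intro h
    have := idxE_lt_iff.mpr h
    omega

theorem pE_lt_of_mem_right {A : Finset E} {e f : E} (he : e ∉ A) (hf : f ∈ A) :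
    pE A e < pE A f := by
  unfold pE
  rw [if_neg he, if_pos hf]
  have h1 := idxE_lt_card e
  omega

end MGraph
namespace MGraph
set_option linter.unusedSectionVars false
set_option linter.unusedVariables false

variable {V E : Type} [Fintype V] [Fintype E] [LinearOrder E] {G : MGraph V E}

noncomputable local instance : DecidableEq E := fun a b => Classical.propDecidable _


theorem erase_inst (i1 i2 : DecidableEq E) (s : Finset E) (a : E) :
    @Finset.erase E i1 s a = @Finset.erase E i2 s a := by
  rw [Subsingleton.elim i1 i2]

theorem insert_erase_inst (i1 i2 : DecidableEq E) (s : Finset E) (a b : E) :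
    @insert E (Finset E) (@Finset.instInsert E i1) b (@Finset.erase E i1 s a) =
    @insert E (Finset E) (@Finset.instInsert E i2) b (@Finset.erase E i2 s a) := by
  rw [Subsingleton.elim i1 i2]

theorem isSpanningTree_inst {G : MGraph V E} (i1 i2 : DecidableEq E)
    {s : Finset E} {a b : E}
    (h : G.IsSpanningTree (@insert E (Finset E) (@Finset.instInsert E i1) b
      (@Finset.erase E i1 s a))) :
    G.IsSpanningTree (@insert E (Finset E) (@Finset.instInsert E i2) b
      (@Finset.erase E i2 s a)) := insert_erase_inst i1 i2 s a b ▸ h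

/-- The canonical maximal spanning forest associated with a subset `A`. -/
noncomputable def fib (G : MGraph V E) [LinearOrder E] (A : Finset E) : Finset E :=
  G.gtree (pE A)

theorem fib_spanning (A : Finset E) : G.IsSpanningTree (G.fib A) :=
  gtree_spanning (pE_inj A)

/-- Edges of the canonical tree outside `A` are internally active. -/
theorem fib_int_active {A : Finset E} {e : E} (he : e ∈ G.fib A) (heA : e ∉ A) :
    G.IntActive (G.fib A) e := by
  refine ⟨he, fun f hf => ?_⟩
  by_cases hef : f = e
  · exact le_of_eq hef.symm
  · have hf' : G.IsSpanningTree (insert f ((G.gtree (pE A)).erase e)) := by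
      exact isSpanningTree_inst _ _ hf
    have hp := gtree_cut_priority (pE_inj A) he hef hf'
    have hfA : f ∉ A := by
      intro hfA
      exact absurd (pE_lt_of_mem_right heA hfA) (by omega)
    exact le_of_lt ((pE_lt_iff_of_not_mem hfA heA).mp hp)

/-- Edges of `A` outside the canonical tree are externally active. -/
theorem fib_ext_active {A : Finset E} {e : E} (he : e ∉ G.fib A) (heA : e ∈ A) :
    G.ExtActive (G.fib A) e := by
  refine ⟨he, (G.fib_spanning A).endsConnected e, fun f hf => ?_⟩
  simp only [cycleEdges, Finset.mem_insert, Finset.mem_filter] at hf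
  rcases hf with rfl | hf
  · exact le_refl _
  · have hp := gtree_cycle_priority (pE_inj A) he hf.1 hf.2
    have hfA : f ∈ A := pE_mem_of_gt heA hp
    exact le_of_lt ((pE_lt_iff_of_mem heA hfA).mp hp)

/-- Uniqueness: a maximal spanning forest whose edges outside `A` are all
internally active and such that all edges of `A` outside it are externally
active must be the canonical tree of `A`. -/
theorem fib_unique {A T' : Finset E} (hT' : G.IsSpanningTree T')
    (hInt : ∀ e ∈ T', e ∉ A → G.IntActive T' e)
    (hExt : ∀ e ∈ A, e ∉ T' → G.ExtActive T' e) : T' = G.fib A := by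
  ext e
  rw [fib, mem_gtree_iff]
  obtain ⟨x, y, hxy⟩ := ends_exists G e
  constructor
  · intro he hEC
    have hcxy : G.Connects (hiSet (pE A) e) x y := (endsConnected_iff hxy).mp hEC
    have hnxy : ¬ G.Connects (T'.erase e) x y :=
      fun h => hT'.1 e he ⟨x, y, hxy, h⟩
    obtain ⟨f, hfhi, a, b, hab, hnab⟩ := connects_cross hcxy hnxy
    rw [mem_hiSet] at hfhi
    have hfT : f ∉ T'.erase e := fun h => hnab (connects_of_mem h hab)
    have hfe : f ≠ e := fun h => by rw [h] at hfhi; omega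
    have hfT' : f ∉ T' := fun h => hfT (Finset.mem_erase.mpr ⟨hfe, h⟩)
    have hexch : G.IsSpanningTree (insert f (T'.erase e)) :=
      hT'.exchange he (not_endsConnected_of_not_connects hab hnab)
    have hecyc : e ∈ G.cycleEdges T' f := by
      rw [cycleEdges, Finset.mem_insert]
      exact Or.inr (Finset.mem_filter.mpr ⟨he,
        not_endsConnected_of_not_connects hab hnab⟩)
    by_cases heA : e ∈ A
    · have hfA : f ∈ A := pE_mem_of_gt heA hfhi
      have hef : e < f := (pE_lt_iff_of_mem heA hfA).mp hfhi
      exact absurd ((hExt f hfA hfT').2.2 e hecyc) (not_le.mpr hef)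
    · have hef : e ≤ f := (hInt e he heA).2 f (isSpanningTree_inst _ _ hexch)
      have hef' : e < f := lt_of_le_of_ne hef hfe.symm
      by_cases hfA : f ∈ A
      · exact absurd ((hExt f hfA hfT').2.2 e hecyc) (not_le.mpr hef')
      · exact absurd ((pE_lt_iff_of_not_mem heA hfA).mp hfhi)
          (not_lt.mpr (le_of_lt hef'))
  · intro he
    by_contra heT'
    apply he
    have hconn : G.Connects T' x y :=
      (hT'.2 x y).mpr (connects_of_mem (Finset.mem_univ e) hxy)
    have hsupp := forest_support hT'.1 hconn
    refine ⟨x, y, hxy, hsupp.mono (fun f hf => ?_)⟩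
    rw [Finset.mem_filter] at hf
    obtain ⟨hfT, hnf⟩ := hf
    have hfe : f ≠ e := fun h => heT' (h ▸ hfT)
    have hnfe : ¬ G.EndsConnected (T'.erase f) e :=
      not_endsConnected_of_not_connects hxy hnf
    have hexch : G.IsSpanningTree (insert e (T'.erase f)) :=
      hT'.exchange hfT hnfe
    rw [mem_hiSet]
    by_cases heA : e ∈ A
    · have hcyc : f ∈ G.cycleEdges T' e := by
        rw [cycleEdges, Finset.mem_insert]
        exact Or.inr (Finset.mem_filter.mpr ⟨hfT, hnfe⟩)
      have hef : e ≤ f := (hExt e heA heT').2.2 f hcyc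
      have hef' : e < f := lt_of_le_of_ne hef hfe.symm
      by_cases hfA : f ∈ A
      · exact (pE_lt_iff_of_mem heA hfA).mpr hef'
      · exact absurd ((hInt f hfT hfA).2 e (isSpanningTree_inst _ _ hexch)) (not_le.mpr hef')
    · by_cases hfA : f ∈ A
      · exact pE_lt_of_mem_right heA hfA
      · have hfe' : f ≤ e := (hInt f hfT hfA).2 e (isSpanningTree_inst _ _ hexch)
        exact (pE_lt_iff_of_not_mem heA hfA).mpr
          (lt_of_le_of_ne hfe' hfe)

end MGraph
namespace MGraph
set_option linter.unusedSectionVars false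
set_option linter.unusedVariables false

variable {V E : Type} [Fintype V] [Fintype E] [LinearOrder E] {G : MGraph V E}

noncomputable local instance : DecidableEq E := fun a b => Classical.propDecidable _

theorem intActives_subset (T : Finset E) : G.intActives T ⊆ T :=
  Finset.filter_subset _ _

theorem mem_intActives {T : Finset E} {e : E} :
    e ∈ G.intActives T ↔ e ∈ T ∧ G.IntActive T e := Finset.mem_filter

theorem mem_extActives {T : Finset E} {e : E} :
    e ∈ G.extActives T ↔ G.ExtActive T e := by
  simp [extActives]

theorem not_mem_of_mem_extActives {T : Finset E} {e : E}
    (h : e ∈ G.extActives T) : e ∉ T := (mem_extActives.mp h).1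

/-- An externally active edge has its ends connected avoiding any set of
internally active edges. -/
theorem ext_endsConnected_avoid {T I : Finset E} (hT : G.IsSpanningTree T)
    (hI : I ⊆ G.intActives T) {x : E} (hx : x ∈ G.extActives T) :
    G.EndsConnected (T \ I) x := by
  obtain ⟨hx1, hx2, hx3⟩ := mem_extActives.mp hx
  obtain ⟨a, b, hab⟩ := ends_exists G x
  have hconn : G.Connects T a b := (endsConnected_iff hab).mp hx2
  have hsupp := forest_support hT.1 hconn
  refine ⟨a, b, hab, hsupp.mono (fun f hf => ?_)⟩
  rw [Finset.mem_filter] at hf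
  obtain ⟨hfT, hnf⟩ := hf
  have hnfe : ¬ G.EndsConnected (T.erase f) x :=
    not_endsConnected_of_not_connects hab hnf
  refine Finset.mem_sdiff.mpr ⟨hfT, fun hfI => ?_⟩
  have hcyc : f ∈ G.cycleEdges T x := by
    rw [cycleEdges, Finset.mem_insert]
    exact Or.inr (Finset.mem_filter.mpr ⟨hfT, hnfe⟩)
  have hxf : x ≤ f := hx3 f hcyc
  have hexch : G.IsSpanningTree (insert x (T.erase f)) := hT.exchange hfT hnfe
  have hfx : f ≤ x := (mem_intActives.mp (hI hfI)).2.2 x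
    (isSpanningTree_inst _ _ hexch)
  exact hx1 (le_antisymm hfx hxf ▸ hfT)

/-- Component count on the interval `[T \ I, (T \ I) ∪ X]`. -/
theorem kA_interval {T I X : Finset E} (hT : G.IsSpanningTree T)
    (hI : I ⊆ G.intActives T) (hX : X ⊆ G.extActives T) :
    G.kA ((T \ I) ∪ X) = G.kA Finset.univ + I.card := by
  have hIT : I ⊆ T := hI.trans (intActives_subset T)
  have step1 : ∀ Y : Finset E, Y ⊆ G.extActives T →
      G.kA ((T \ I) ∪ Y) = G.kA (T \ I) := by
    intro Y
    induction Y using Finset.induction_on with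
    | empty => intro _; rw [Finset.union_empty]
    | @insert x X' hx ih =>
      intro hsub
      have hX' : X' ⊆ G.extActives T := (Finset.subset_insert _ _).trans hsub
      have hxE : x ∈ G.extActives T := hsub (Finset.mem_insert_self _ _)
      rw [Finset.union_insert, kA_insert_of_endsConnected
        ((ext_endsConnected_avoid hT hI hxE).mono Finset.subset_union_left)]
      exact ih hX'
  rw [step1 X hX]
  have hfI : G.IsForest (T \ I) := hT.1.subset (Finset.sdiff_subset)
  have h1 := forest_card hfI
  have h2 := forest_card hT.1
  have h3 : G.kA T = G.kA Finset.univ := hT.kA_eq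
  have h4 : (T \ I).card = T.card - I.card := Finset.card_sdiff_of_subset hIT
  have h5 : I.card ≤ T.card := Finset.card_le_card hIT
  omega

end MGraph
namespace MGraph
set_option linter.unusedSectionVars false
set_option linter.unusedVariables false

variable {V E : Type} [Fintype V] [Fintype E] [LinearOrder E] {G : MGraph V E}

noncomputable local instance : DecidableEq E := fun a b => Classical.propDecidable _

theorem inter_union_sdiff' (A T : Finset E) : A ∩ T ∪ A \ T = A := by
  ext e
  simp only [Finset.mem_union, Finset.mem_inter, Finset.mem_sdiff]
  tauto

theorem fiber_sum {R : Type} [CommRing R] (γ : E → R) {T : Finset E}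
    (hT : G.IsSpanningTree T) {s : Finset (Finset E)}
    (hs : ∀ A, A ∈ s ↔ G.fib A = T) :
    ∑ A ∈ s,
        Polynomial.X ^ G.kA A * Polynomial.C (∏ e ∈ A, γ e) =
      ∑ q ∈ (G.intActives T).powerset ×ˢ (G.extActives T).powerset,
        Polynomial.X ^ (G.kA Finset.univ + q.1.card) *
          Polynomial.C ((∏ e ∈ T \ q.1, γ e) * ∏ e ∈ q.2, γ e) := by
  refine Finset.sum_nbij' (fun A => (T \ A, A \ T)) (fun q => (T \ q.1) ∪ q.2)
    ?_ ?_ ?_ ?_ ?_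
  · -- maps into the product of powersets
    intro A hA
    have hfib : G.fib A = T := (hs A).mp hA
    rw [Finset.mem_product]
    constructor
    · rw [Finset.mem_powerset]
      intro e he
      rw [Finset.mem_sdiff] at he
      refine mem_intActives.mpr ⟨he.1, ?_⟩
      rw [← hfib] at he ⊢
      exact fib_int_active he.1 he.2
    · rw [Finset.mem_powerset]
      intro e he
      rw [Finset.mem_sdiff] at he
      refine mem_extActives.mpr ?_
      rw [← hfib] at he ⊢
      exact fib_ext_active he.2 he.1
  · -- maps back into the fiber
    rintro ⟨I, X⟩ hq
    rw [Finset.mem_product, Finset.mem_powerset, Finset.mem_powerset] at hq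
    obtain ⟨hI, hX⟩ := hq
    rw [hs]
    refine (fib_unique hT ?_ ?_).symm
    · intro e heT heA
      have heI : e ∈ I := by
        by_contra heI
        exact heA (Finset.mem_union_left _ (Finset.mem_sdiff.mpr ⟨heT, heI⟩))
      exact (mem_intActives.mp (hI heI)).2
    · intro e heA heT
      have heX : e ∈ X := by
        rcases Finset.mem_union.mp heA with h | h
        · exact absurd (Finset.mem_sdiff.mp h).1 heT
        · exact h
      exact mem_extActives.mp (hX heX)
  · -- left inverse
    intro A hA
    dsimp only
    rw [Finset.sdiff_sdiff_self_left, Finset.inter_comm, inter_union_sdiff']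
  · -- right inverse
    rintro ⟨I, X⟩ hq
    rw [Finset.mem_product, Finset.mem_powerset, Finset.mem_powerset] at hq
    obtain ⟨hI, hX⟩ := hq
    have hIT : I ⊆ T := hI.trans (intActives_subset T)
    have hXT : ∀ e ∈ X, e ∉ T := fun e he => not_mem_of_mem_extActives (hX he)
    dsimp only
    rw [Prod.mk.injEq]
    constructor
    · ext e
      simp only [Finset.mem_sdiff, Finset.mem_union]
      constructor
      · rintro ⟨heT, hnot⟩
        by_contra heI
        exact hnot (Or.inl ⟨heT, heI⟩)
      · intro heI
        exact ⟨hIT heI, fun h => by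
          rcases h with ⟨_, hnI⟩ | hX'
          · exact hnI heI
          · exact hXT e hX' (hIT heI)⟩
    · ext e
      simp only [Finset.mem_sdiff, Finset.mem_union]
      constructor
      · rintro ⟨h | h, hnT⟩
        · exact absurd h.1 hnT
        · exact h
      · intro heX
        exact ⟨Or.inr heX, hXT e heX⟩
  · -- values agree
    intro A hA
    have hfib : G.fib A = T := (hs A).mp hA
    dsimp only
    have hsubI : T \ A ⊆ G.intActives T := by
      intro e he
      rw [Finset.mem_sdiff] at he
      refine mem_intActives.mpr ⟨he.1, ?_⟩
      rw [← hfib] at he ⊢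
      exact fib_int_active he.1 he.2
    have hsubX : A \ T ⊆ G.extActives T := by
      intro e he
      rw [Finset.mem_sdiff] at he
      refine mem_extActives.mpr ?_
      rw [← hfib] at he ⊢
      exact fib_ext_active he.2 he.1
    have hAeq : (T \ (T \ A)) ∪ (A \ T) = A := by
      rw [Finset.sdiff_sdiff_self_left, Finset.inter_comm, inter_union_sdiff']
    have hk : G.kA A = G.kA Finset.univ + (T \ A).card := by
      conv_lhs => rw [← hAeq]
      exact kA_interval hT hsubI hsubX
    have hprod : (∏ e ∈ A, γ e) =
        (∏ e ∈ T \ (T \ A), γ e) * ∏ e ∈ A \ T, γ e := by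
      rw [← Finset.prod_union (Finset.disjoint_sdiff.mono_left
        (Finset.sdiff_subset))]
      · rw [hAeq]
    rw [hk, hprod]

theorem ext_sum {R : Type} [CommRing R] (γ : E → R) (T : Finset E) :
    ∑ X ∈ (G.extActives T).powerset, Polynomial.C (∏ e ∈ X, γ e) =
      ∏ e ∈ G.extActives T, (Polynomial.C (γ e) + 1) := by
  rw [Finset.prod_add]
  refine Finset.sum_congr rfl fun t _ => ?_
  rw [map_prod]
  simp

theorem int_sum {R : Type} [CommRing R] (γ : E → R) (T : Finset E) :
    ∑ I ∈ (G.intActives T).powerset,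
        Polynomial.X ^ I.card * Polynomial.C (∏ e ∈ G.intActives T \ I, γ e) =
      ∏ e ∈ G.intActives T, (Polynomial.C (γ e) + Polynomial.X) := by
  have : ∀ e ∈ G.intActives T,
      (Polynomial.C (γ e) + Polynomial.X : Polynomial R) =
      (Polynomial.X + Polynomial.C (γ e)) := fun e _ => add_comm _ _
  rw [Finset.prod_congr rfl this, Finset.prod_add]
  refine Finset.sum_congr rfl fun t _ => ?_
  rw [map_prod, Finset.prod_const]

/-- The split of the edge set of `T` for `I ⊆ intActives T`. -/
theorem sdiff_split {T I : Finset E} (hI : I ⊆ G.intActives T) :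
    T \ I = G.intInactives T ∪ (G.intActives T \ I) := by
  ext e
  simp only [Finset.mem_sdiff, Finset.mem_union, intInactives, intActives,
    Finset.mem_filter]
  constructor
  · rintro ⟨heT, heI⟩
    by_cases hact : G.IntActive T e
    · exact Or.inr ⟨⟨heT, hact⟩, heI⟩
    · exact Or.inl ⟨heT, hact⟩
  · rintro (⟨heT, hact⟩ | ⟨⟨heT, hact⟩, heI⟩)
    · exact ⟨heT, fun heI => hact (mem_intActives.mp (hI heI)).2⟩
    · exact ⟨heT, heI⟩

theorem disjoint_split (T I : Finset E) :
    Disjoint (G.intInactives T) (G.intActives T \ I) := by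
  refine Finset.disjoint_left.mpr fun e he he' => ?_
  rw [intInactives, Finset.mem_filter] at he
  exact he.2 (mem_intActives.mp (Finset.mem_sdiff.mp he').1).2

end MGraph

noncomputable local instance (priority := 5000) (α : Type) : DecidableEq α :=
  fun _ _ => Classical.propDecidable _

/-- Traldi's spanning tree expansion of the multivariate Tutte
polynomial:
`Z_T(G;θ,γ) = θ^{k(G)} Σ_T (∏_{II} γ_e)(∏_{IA}(γ_e+θ))(∏_{EA}(γ_e+1))`. -/
theorem ZT_spanning_tree_expansion {V E R : Type} [Fintype V] [Fintype E]
    [LinearOrder E] [CommRing R] (G : MGraph V E) (γ : E → R) :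
    G.ZT γ = Polynomial.X ^ G.kA Finset.univ *
      ∑ T ∈ Finset.univ.filter (fun T => G.IsSpanningTree T),
        (∏ e ∈ G.intInactives T, Polynomial.C (γ e)) *
        (∏ e ∈ G.intActives T, (Polynomial.C (γ e) + Polynomial.X)) *
        (∏ e ∈ G.extActives T, (Polynomial.C (γ e) + 1)) := by
  rw [Finset.mul_sum]
  unfold MGraph.ZT
  rw [← Finset.sum_fiberwise_of_maps_to
    (g := fun A : Finset E => G.fib A)
    (t := Finset.univ.filter (fun T => G.IsSpanningTree T))
    (fun A _ => Finset.mem_filter.mpr ⟨Finset.mem_univ _, G.fib_spanning A⟩)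
    (fun A => Polynomial.X ^ G.kA A * Polynomial.C (∏ e ∈ A, γ e))]
  refine Finset.sum_congr rfl fun T hTmem => ?_
  have hT : G.IsSpanningTree T := (Finset.mem_filter.mp hTmem).2
  rw [MGraph.fiber_sum γ hT (fun A => by simp [Finset.mem_filter]), Finset.sum_product]
  have hsplit : ∀ I ∈ (G.intActives T).powerset,
      (∏ e ∈ T \ I, γ e) =
      (∏ e ∈ G.intInactives T, γ e) * ∏ e ∈ G.intActives T \ I, γ e := by
    intro I hI
    rw [MGraph.sdiff_split (Finset.mem_powerset.mp hI),
      Finset.prod_union (G.disjoint_split T I)]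
  have step : ∀ I ∈ (G.intActives T).powerset,
      (∑ X ∈ (G.extActives T).powerset,
        Polynomial.X ^ (G.kA Finset.univ + I.card) *
          Polynomial.C ((∏ e ∈ T \ I, γ e) * ∏ e ∈ X, γ e)) =
      (Polynomial.X ^ G.kA Finset.univ *
          Polynomial.C (∏ e ∈ G.intInactives T, γ e) *
        (Polynomial.X ^ I.card *
          Polynomial.C (∏ e ∈ G.intActives T \ I, γ e))) *
        ∏ e ∈ G.extActives T, (Polynomial.C (γ e) + 1) := by
    intro I hI
    rw [← MGraph.ext_sum γ T, Finset.mul_sum]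
    refine Finset.sum_congr rfl fun Xs _ => ?_
    rw [hsplit I hI, map_mul, map_mul, pow_add]
    ring
  rw [Finset.sum_congr rfl step, ← Finset.sum_mul, ← Finset.mul_sum,
    MGraph.int_sum γ T, map_prod]
  ring
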